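/- Let f : ℝⁿ → ℝ ∪ {∞} be lower semicontinuous and prox-regular at x̄ for x̄* with parameters r ≥ 0 and ε > 0, and let T be the f-attentive ε-localization of ∂f around (x̄, x̄*). Then for every (x̃, x̃*) ∈ gph T, the f-attentive tangent cone to gph ∂f at (x̃, x̃*) coincides with the ordinary (Bouligand) tangent cone to gph T at (x̃, x̃*). -/

import Mathlib

open scoped RealInnerProductSpace
open Filter Topology Metric Matrix

noncomputable section

abbrev En (n : ℕ) := EuclideanSpace ℝ (Fin n)

variable {n : ℕ}

/-- The regular (Fréchet) subdifferential of an extended-real-valued function. -/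
def FSubdiff (f : En n → EReal) (x : En n) : Set (En n) :=
  {v | ∀ c : ℝ, 0 < c → ∃ δ > (0:ℝ), ∀ y ∈ ball x δ,
    f x + ((⟪v, y - x⟫ - c * ‖y - x‖ : ℝ) : EReal) ≤ f y}

/-- The limiting (Mordukhovich) subdifferential, via f-attentive convergence. -/
def LSubdiff (f : En n → EReal) (x : En n) : Set (En n) :=
  {v | ∃ xs vs : ℕ → En n, (∀ k, vs k ∈ FSubdiff f (xs k)) ∧
    Tendsto xs atTop (𝓝 x) ∧ Tendsto (fun k => f (xs k)) atTop (𝓝 (f x)) ∧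
    Tendsto vs atTop (𝓝 v)}

/-- The graph of the f-attentive ε-localization of the subdifferential around (x̄, x̄*). -/
def GphT (f : En n → EReal) (xb xbs : En n) (ε : ℝ) : Set (En n × En n) :=
  {p | p.2 ∈ LSubdiff f p.1 ∧ f p.1 < f xb + (ε : EReal) ∧
       p.1 ∈ ball xb ε ∧ p.2 ∈ ball xbs ε}

/-- Prox-regularity of f at x̄ for x̄* with parameters r ≥ 0 and ε > 0. -/
def ProxReg (f : En n → EReal) (xb xbs : En n) (r ε : ℝ) : Prop :=
  (∃ a : ℝ, f xb = (a : EReal)) ∧ xbs ∈ LSubdiff f xb ∧ 0 ≤ r ∧ 0 < ε ∧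
  ∀ x' ∈ ball xb ε, ∀ p ∈ GphT f xb xbs ε,
    f p.1 + ((⟪p.2, x' - p.1⟫ - r / 2 * ‖x' - p.1‖ ^ 2 : ℝ) : EReal) ≤ f x'

/-- The f-attentive tangent cone to the graph of ∂f at (x, x*). -/
def AttTangent (f : En n → EReal) (x xstar : En n) : Set (En n × En n) :=
  {u | ∃ (t : ℕ → ℝ) (xs vs : ℕ → En n), (∀ k, 0 < t k) ∧ Tendsto t atTop (𝓝 0) ∧
    (∀ k, vs k ∈ LSubdiff f (xs k)) ∧ Tendsto xs atTop (𝓝 x) ∧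
    Tendsto (fun k => f (xs k)) atTop (𝓝 (f x)) ∧ Tendsto vs atTop (𝓝 xstar) ∧
    Tendsto (fun k => (t k)⁻¹ • ((xs k, vs k) - (x, xstar))) atTop (𝓝 u)}

/-- The ordinary (Bouligand) tangent cone to a set C at p. -/
def TanCone (C : Set (En n × En n)) (p : En n × En n) : Set (En n × En n) :=
  {u | ∃ (t : ℕ → ℝ) (c : ℕ → En n × En n), (∀ k, 0 < t k) ∧ Tendsto t atTop (𝓝 0) ∧
    (∀ k, c k ∈ C) ∧ Tendsto c atTop (𝓝 p) ∧
    Tendsto (fun k => (t k)⁻¹ • (c k - p)) atTop (𝓝 u)}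


private lemma fatt_key {n : ℕ} (f : En n → EReal) (xb xbs : En n) (r ε : ℝ)
    (hlsc : LowerSemicontinuous f) (hpr : ProxReg f xb xbs r ε)
    (p : En n × En n) (hp : p ∈ GphT f xb xbs ε)
    (c : ℕ → En n × En n) (hc : ∀ k, c k ∈ GphT f xb xbs ε)
    (hcp : Tendsto c atTop (𝓝 p)) :
    Tendsto (fun k => f (c k).1) atTop (𝓝 (f p.1)) := by
  obtain ⟨⟨a0, hfxb⟩, -, -, hε, hkey⟩ := hpr
  have hball := hp.2.2.1
  set a : ℕ → ℝ := fun k => ⟪(c k).2, p.1 - (c k).1⟫ - r / 2 * ‖p.1 - (c k).1‖ ^ 2 with ha_def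
  have hineq : ∀ k, f (c k).1 + ((a k : ℝ) : EReal) ≤ f p.1 :=
    fun k => hkey p.1 hball (c k) (hc k)
  have hc1 : Tendsto (fun k => (c k).1) atTop (𝓝 p.1) := (continuous_fst.tendsto p).comp hcp
  have hc2 : Tendsto (fun k => (c k).2) atTop (𝓝 p.2) := (continuous_snd.tendsto p).comp hcp
  have hdiff : Tendsto (fun k => p.1 - (c k).1) atTop (𝓝 0) := by
    have := (tendsto_const_nhds : Tendsto (fun _ : ℕ => p.1) atTop (𝓝 p.1)).sub hc1
    simpa using this
  have ha : Tendsto a atTop (𝓝 0) := by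
    have h1 : Tendsto (fun k => ⟪(c k).2, p.1 - (c k).1⟫) atTop (𝓝 (⟪p.2, (0 : En n)⟫)) :=
      hc2.inner hdiff
    have h2 : Tendsto (fun k => r / 2 * ‖p.1 - (c k).1‖ ^ 2) atTop
        (𝓝 (r / 2 * ‖(0 : En n)‖ ^ 2)) :=
      tendsto_const_nhds.mul (hdiff.norm.pow 2)
    simpa [ha_def] using h1.sub h2
  have hlt : f p.1 < ((a0 + ε : ℝ) : EReal) := by
    rw [EReal.coe_add, ← hfxb]; exact hp.2.1
  have htop : f p.1 ≠ ⊤ := hlt.ne_top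
  by_cases hbot : f p.1 = ⊥
  · have hb : ∀ k, f (c k).1 = ⊥ := by
      intro k
      have h := hineq k
      rw [hbot, le_bot_iff] at h
      rcases EReal.add_eq_bot_iff.1 h with h | h
      · exact h
      · exact absurd h (EReal.coe_ne_bot _)
    rw [hbot]
    simp only [hb]
    exact tendsto_const_nhds
  · lift f p.1 to ℝ using ⟨htop, hbot⟩ with b hb
    have hup : ∀ k, f (c k).1 ≤ ((b - a k : ℝ) : EReal) := by
      intro k
      rw [EReal.coe_sub]
      exact (EReal.le_sub_iff_add_le (Or.inl (EReal.coe_ne_bot _))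
        (Or.inl (EReal.coe_ne_top _))).2 (hineq k)
    refine tendsto_order.2 ⟨?_, ?_⟩
    · intro y hy
      exact hc1.eventually (hlsc p.1 y (by show f p.1 > y; rw [← hb]; exact hy))
    · intro y hy
      have hco : Tendsto (fun k => ((b - a k : ℝ) : EReal)) atTop (𝓝 ((b : ℝ) : EReal)) := by
        apply (continuous_coe_real_ereal.tendsto b).comp
        simpa using tendsto_const_nhds.sub ha
      filter_upwards [hco.eventually_lt_const hy] with k hk
      exact lt_of_le_of_lt (hup k) hk

theorem stmt4 (f : En n → EReal) (xb xbs : En n) (r ε : ℝ)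
    (hlsc : LowerSemicontinuous f) (hpr : ProxReg f xb xbs r ε) :
    ∀ p ∈ GphT f xb xbs ε,
      AttTangent f p.1 p.2 = TanCone (GphT f xb xbs ε) p := by
  intro p hp
  ext u
  constructor
  · rintro ⟨t, xs, vs, hpos, ht, hsub, hxs, hfxs, hvs, hlim⟩
    have e1 : ∀ᶠ k in atTop, f (xs k) < f xb + (ε : EReal) := hfxs.eventually_lt_const hp.2.1
    have e2 : ∀ᶠ k in atTop, xs k ∈ ball xb ε :=
      hxs.eventually (isOpen_ball.eventually_mem hp.2.2.1)
    have e3 : ∀ᶠ k in atTop, vs k ∈ ball xbs ε :=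
      hvs.eventually (isOpen_ball.eventually_mem hp.2.2.2)
    obtain ⟨N, hN⟩ := eventually_atTop.1 ((e1.and e2).and e3)
    refine ⟨fun k => t (k + N), fun k => (xs (k + N), vs (k + N)), fun k => hpos _,
      ht.comp (tendsto_add_atTop_nat N), fun k => ?_, ?_, ?_⟩
    · obtain ⟨⟨h1, h2⟩, h3⟩ := hN (k + N) (Nat.le_add_left N k)
      exact ⟨hsub _, h1, h2, h3⟩
    · exact (hxs.comp (tendsto_add_atTop_nat N)).prodMk_nhds
        (hvs.comp (tendsto_add_atTop_nat N))
    · exact hlim.comp (tendsto_add_atTop_nat N)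
  · rintro ⟨t, c, hpos, ht, hc, hcp, hlim⟩
    exact ⟨t, fun k => (c k).1, fun k => (c k).2, hpos, ht, fun k => (hc k).1,
      (continuous_fst.tendsto p).comp hcp,
      fatt_key f xb xbs r ε hlsc hpr p hp c hc hcp,
      (continuous_snd.tendsto p).comp hcp, hlim⟩
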